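/- arXiv:2506.18073 — 2 statements merged into one kernel-verified Lean document; each statement's English description precedes it below -/
import Mathlib

section
/- Let A* be a primitive nonnegative square matrix with spectral radius λ and positive right Perron vector v (so A* v = λ v). Let 𝒜 be a finite set of nonnegative matrices of the same size containing A*, closed under replacing a single row of A* with the corresponding row of any member, such that every such single-row replacement yields a primitive matrix, and such that λ = min over D ∈ 𝒜 of the spectral radius of D. Then A v ≥ λ v entrywise for every A ∈ 𝒜. -/
open Matrix

noncomputable def specRad {n : Type*} [Fintype n] [DecidableEq n]
    (A : Matrix n n ℝ) : ℝ :=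
  sSup {r : ℝ | ∃ μ ∈ spectrum ℂ (A.map Complex.ofReal), r = ‖μ‖}

def IsPrimitive {n : Type*} [Fintype n] [DecidableEq n]
    (A : Matrix n n ℝ) : Prop :=
  ∃ k : ℕ, 1 ≤ k ∧ ∀ i j, 0 < (A ^ k) i j

/-- Entries of powers of a nonnegative matrix are nonnegative. -/
lemma pow_entry_nonneg {m : ℕ} {B : Matrix (Fin m) (Fin m) ℝ}
    (hB : ∀ i j, 0 ≤ B i j) : ∀ n, ∀ i j, 0 ≤ (B ^ n) i j := by
  intro n
  induction n with
  | zero =>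
      intro i j
      rw [pow_zero]
      by_cases h : i = j <;> simp [Matrix.one_apply, h]
  | succ n ih =>
      intro i j
      rw [pow_succ, Matrix.mul_apply]
      exact Finset.sum_nonneg fun k _ => mul_nonneg (ih i k) (hB k j)

/-- Collatz–Wielandt style bound propagates to powers. -/
lemma pow_mulVec_le {m : ℕ} {B : Matrix (Fin m) (Fin m) ℝ}
    (hB : ∀ i j, 0 ≤ B i j) {lam : ℝ} (hl : 0 ≤ lam) {v : Fin m → ℝ}
    (hle : ∀ i, B.mulVec v i ≤ lam * v i) :
    ∀ n i, (B ^ n).mulVec v i ≤ lam ^ n * v i := by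
  intro n
  induction n with
  | zero => intro i; simp [Matrix.mulVec, Matrix.one_apply, dotProduct]
  | succ n ih =>
      intro i
      have hrw : (B ^ (n + 1)).mulVec v = (B ^ n).mulVec (B.mulVec v) := by
        rw [pow_succ, ← Matrix.mulVec_mulVec]
      rw [hrw]
      have h1 : (B ^ n).mulVec (B.mulVec v) i ≤ lam * ((B ^ n).mulVec v i) := by
        set u := B.mulVec v with hu
        simp only [Matrix.mulVec, dotProduct, Finset.mul_sum]
        refine Finset.sum_le_sum fun j _ => ?_
        calc (B ^ n) i j * u j ≤ (B ^ n) i j * (lam * v j) :=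
              mul_le_mul_of_nonneg_left (hle j) (pow_entry_nonneg hB n i j)
          _ = lam * ((B ^ n) i j * v j) := by ring
      calc (B ^ n).mulVec (B.mulVec v) i ≤ lam * ((B ^ n).mulVec v i) := h1
        _ ≤ lam * (lam ^ n * v i) := mul_le_mul_of_nonneg_left (ih i) hl
        _ = lam ^ (n + 1) * v i := by ring

/-- Membership in the spectrum of a complex matrix gives an eigenvector. -/
lemma exists_eigvec {m : ℕ} {M : Matrix (Fin m) (Fin m) ℂ} {μ : ℂ}
    (h : μ ∈ spectrum ℂ M) : ∃ w : Fin m → ℂ, w ≠ 0 ∧ M.mulVec w = μ • w := by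
  rw [spectrum.mem_iff] at h
  have hdet : (algebraMap ℂ (Matrix (Fin m) (Fin m) ℂ) μ - M).det = 0 := by
    by_contra hd
    exact h ((Matrix.isUnit_iff_isUnit_det _).2 (isUnit_iff_ne_zero.2 hd))
  obtain ⟨w, hne, heq⟩ := Matrix.exists_mulVec_eq_zero_iff.2 hdet
  refine ⟨w, hne, ?_⟩
  rw [Matrix.sub_mulVec, Algebra.algebraMap_eq_smul_one, Matrix.smul_mulVec,
    Matrix.one_mulVec, sub_eq_zero] at heq
  exact heq.symm

/-- Eigenvector relation for powers. -/
lemma pow_mulVec_eig {m : ℕ} {M : Matrix (Fin m) (Fin m) ℂ} {μ : ℂ} {w : Fin m → ℂ}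
    (h : M.mulVec w = μ • w) : ∀ n, (M ^ n).mulVec w = μ ^ n • w := by
  intro n
  induction n with
  | zero => simp [Matrix.one_mulVec]
  | succ n ih =>
      rw [pow_succ', ← Matrix.mulVec_mulVec, ih, Matrix.mulVec_smul, h, smul_smul,
        ← _root_.pow_succ]

/-- Key lemma: if `B` is nonnegative primitive, `v > 0`, `B v ≤ lam v`
with strict inequality at one coordinate, then `specRad B < lam`. -/
lemma specRad_lt_of {m : ℕ} {B : Matrix (Fin m) (Fin m) ℝ}
    (hB : ∀ i j, 0 ≤ B i j) (hBprim : _root_.IsPrimitive B)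
    {lam : ℝ} (hlp : 0 < lam) {v : Fin m → ℝ} (hv : ∀ i, 0 < v i)
    (hle : ∀ i, B.mulVec v i ≤ lam * v i) {a₀ : Fin m}
    (hstrict : B.mulVec v a₀ < lam * v a₀) : specRad B < lam := by
  haveI : Nonempty (Fin m) := ⟨a₀⟩
  obtain ⟨k, hk1, hkpos⟩ := hBprim
  set C := B ^ (k + 1) with hC
  have hCnn : ∀ i j, 0 ≤ C i j := pow_entry_nonneg hB (k + 1)
  -- strict inequality for C
  have hCv : ∀ i, C.mulVec v i < lam ^ (k + 1) * v i := by
    intro i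
    have hrw : C.mulVec v i = ∑ j, (B ^ k) i j * (B.mulVec v j) := by
      rw [hC, pow_succ, ← Matrix.mulVec_mulVec]
      simp [Matrix.mulVec, dotProduct]
    have h1 : ∑ j, (B ^ k) i j * (B.mulVec v j) < ∑ j, (B ^ k) i j * (lam * v j) := by
      refine Finset.sum_lt_sum (fun j _ =>
        mul_le_mul_of_nonneg_left (hle j) (pow_entry_nonneg hB k i j))
        ⟨a₀, Finset.mem_univ _, mul_lt_mul_of_pos_left hstrict (hkpos i a₀)⟩
    have h2 : ∑ j, (B ^ k) i j * (lam * v j) = lam * ((B ^ k).mulVec v i) := by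
      simp only [Matrix.mulVec, dotProduct, Finset.mul_sum]
      exact Finset.sum_congr rfl fun j _ => by ring
    have h3 : lam * ((B ^ k).mulVec v i) ≤ lam * (lam ^ k * v i) :=
      mul_le_mul_of_nonneg_left (pow_mulVec_le hB hlp.le hle k i) hlp.le
    calc C.mulVec v i < lam * ((B ^ k).mulVec v i) := by rw [hrw]; rw [← h2]; exact h1
      _ ≤ lam * (lam ^ k * v i) := h3
      _ = lam ^ (k + 1) * v i := by ring
  -- a uniform bound strictly less than lam ^ (k+1)
  set r : ℝ := Finset.univ.sup' Finset.univ_nonempty (fun i => C.mulVec v i / v i) with hr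
  have hr_lt : r < lam ^ (k + 1) := by
    rw [hr, Finset.sup'_lt_iff]
    intro i _
    exact (div_lt_iff₀ (hv i)).2 (hCv i)
  have hCv_le : ∀ i, C.mulVec v i ≤ r * v i := by
    intro i
    have := Finset.le_sup' (fun i => C.mulVec v i / v i) (Finset.mem_univ i)
    exact (div_le_iff₀ (hv i)).1 this
  have hCv0 : ∀ i, 0 ≤ C.mulVec v i := by
    intro i
    simp only [Matrix.mulVec, dotProduct]
    exact Finset.sum_nonneg fun j _ => mul_nonneg (hCnn i j) (hv j).le
  have hr0 : 0 ≤ r := by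
    have h1 : 0 ≤ C.mulVec v a₀ / v a₀ := div_nonneg (hCv0 a₀) (hv a₀).le
    exact le_trans h1
      (Finset.le_sup' (f := fun i => C.mulVec v i / v i) (Finset.mem_univ a₀))
  set s : ℝ := r ^ ((k + 1 : ℕ) : ℝ)⁻¹ with hs
  have hs0 : 0 ≤ s := Real.rpow_nonneg hr0 _
  have hs_pow : s ^ (k + 1) = r := Real.rpow_inv_natCast_pow hr0 (Nat.succ_ne_zero k)
  have hs_lt : s < lam := by
    by_contra hsl
    push_neg at hsl
    have : lam ^ (k + 1) ≤ s ^ (k + 1) := pow_le_pow_left₀ hlp.le hsl (k + 1)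
    rw [hs_pow] at this
    linarith
  -- every eigenvalue has absolute value at most s
  have habs : ∀ μ ∈ spectrum ℂ (B.map Complex.ofReal), ‖μ‖ ≤ s := by
    intro μ hμ
    obtain ⟨w, hw0, hw⟩ := exists_eigvec hμ
    have hCw : (C.map Complex.ofReal).mulVec w = μ ^ (k + 1) • w := by
      have hmp : C.map Complex.ofReal = (B.map Complex.ofReal) ^ (k + 1) := by
        rw [hC]
        have : ∀ (n : ℕ) (M : Matrix (Fin m) (Fin m) ℝ),
            (M ^ n).map Complex.ofReal = (M.map Complex.ofReal) ^ n := by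
          intro n M
          induction n with
          | zero =>
              ext i j
              simp [Matrix.map_apply, Matrix.one_apply, apply_ite]
          | succ n ih =>
              have hmul : ∀ (P Q : Matrix (Fin m) (Fin m) ℝ),
                  (P * Q).map Complex.ofReal
                    = P.map Complex.ofReal * Q.map Complex.ofReal := by
                intro P Q
                ext i j
                simp [Matrix.mul_apply, Matrix.map_apply]
              rw [pow_succ, hmul, ih, pow_succ]
        exact this (k + 1) B
      rw [hmp]
      exact pow_mulVec_eig hw (k + 1)
    -- pick an index maximizing |w i| / v i
    obtain ⟨i₀, -, hmax⟩ := Finset.exists_max_image Finset.univ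
      (fun i => ‖w i‖ / v i) Finset.univ_nonempty
    have hwmax : ∀ j, ‖w j‖ ≤ ‖w i₀‖ / v i₀ * v j := by
      intro j
      have := hmax j (Finset.mem_univ j)
      calc ‖w j‖ = ‖w j‖ / v j * v j :=
            (div_mul_cancel₀ _ (hv j).ne').symm
        _ ≤ ‖w i₀‖ / v i₀ * v j :=
            mul_le_mul_of_nonneg_right this (hv j).le
    have hwi₀ : 0 < ‖w i₀‖ := by
      by_contra hc
      push_neg at hc
      have hwi0 : ‖w i₀‖ = 0 := le_antisymm hc (norm_nonneg _)
      apply hw0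
      funext j
      have := hwmax j
      rw [hwi0] at this
      simp only [zero_div, zero_mul] at this
      have := le_antisymm this (norm_nonneg _)
      simpa using norm_eq_zero.1 this
    -- the key estimate at i₀
    have hkey : ‖μ‖ ^ (k + 1) * ‖w i₀‖ ≤ r * ‖w i₀‖ := by
      have h1 : ‖μ‖ ^ (k + 1) * ‖w i₀‖
          = ‖((C.map Complex.ofReal).mulVec w) i₀‖ := by
        rw [hCw]
        simp [Pi.smul_apply, smul_eq_mul, norm_mul, norm_pow]
      have h2 : ‖((C.map Complex.ofReal).mulVec w) i₀‖
          ≤ ∑ j, C i₀ j * ‖w j‖ := by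
        calc ‖((C.map Complex.ofReal).mulVec w) i₀‖
            ≤ ∑ j, ‖(C i₀ j : ℂ) * w j‖ := by
              simpa [Matrix.mulVec, dotProduct, Matrix.map_apply]
                using norm_sum_le Finset.univ
                  (fun j => ((C i₀ j : ℂ) * w j))
          _ = ∑ j, C i₀ j * ‖w j‖ := by
              refine Finset.sum_congr rfl fun j _ => ?_
              rw [norm_mul, Complex.norm_real, Real.norm_eq_abs, abs_of_nonneg (hCnn i₀ j)]
      have h3 : ∑ j, C i₀ j * ‖w j‖
          ≤ ‖w i₀‖ / v i₀ * (C.mulVec v i₀) := by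
        simp only [Matrix.mulVec, dotProduct, Finset.mul_sum]
        refine Finset.sum_le_sum fun j _ => ?_
        calc C i₀ j * ‖w j‖
            ≤ C i₀ j * (‖w i₀‖ / v i₀ * v j) :=
              mul_le_mul_of_nonneg_left (hwmax j) (hCnn i₀ j)
          _ = ‖w i₀‖ / v i₀ * (C i₀ j * v j) := by ring
      have h4 : ‖w i₀‖ / v i₀ * (C.mulVec v i₀)
          ≤ ‖w i₀‖ / v i₀ * (r * v i₀) :=
        mul_le_mul_of_nonneg_left (hCv_le i₀) (div_nonneg hwi₀.le (hv i₀).le)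
      have h5 : ‖w i₀‖ / v i₀ * (r * v i₀) = r * ‖w i₀‖ := by
        rw [mul_comm r (v i₀), ← mul_assoc, div_mul_cancel₀ _ (hv i₀).ne']
        ring
      calc ‖μ‖ ^ (k + 1) * ‖w i₀‖
          = ‖((C.map Complex.ofReal).mulVec w) i₀‖ := h1
        _ ≤ ∑ j, C i₀ j * ‖w j‖ := h2
        _ ≤ ‖w i₀‖ / v i₀ * (C.mulVec v i₀) := h3
        _ ≤ ‖w i₀‖ / v i₀ * (r * v i₀) := h4
        _ = r * ‖w i₀‖ := by rw [h5]
    have hpow : ‖μ‖ ^ (k + 1) ≤ s ^ (k + 1) := by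
      rw [hs_pow]
      exact le_of_mul_le_mul_right hkey hwi₀
    exact (pow_le_pow_iff_left₀ (norm_nonneg μ) hs0 (Nat.succ_ne_zero k)).1 hpow
  -- conclude
  have : specRad B ≤ s := by
    apply Real.sSup_le _ hs0
    rintro x ⟨μ, hμ, rfl⟩
    exact habs μ hμ
  linarith

/-- let `A*` be primitive nonnegative with spectral radius `lam`
and positive right Perron vector `v`.  Let `𝒜` be a finite set of nonnegative
matrices containing `A*`, such that replacing a single row of `A*` with the
corresponding row of any member of `𝒜` yields a primitive matrix again in `𝒜`,
and such that `lam` is the minimum of the spectral radii over `𝒜`.  Then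
`A v ≥ lam • v` entrywise for every `A ∈ 𝒜`. -/
theorem stmt4 {m : ℕ} (Astar : Matrix (Fin m) (Fin m) ℝ)
    (𝒜 : Finset (Matrix (Fin m) (Fin m) ℝ))
    (hmem : Astar ∈ 𝒜)
    (hnn : ∀ A ∈ 𝒜, ∀ i j, 0 ≤ A i j)
    (hprim : _root_.IsPrimitive Astar)
    (lam : ℝ) (hlam : lam = specRad Astar)
    (v : Fin m → ℝ) (hv : ∀ i, 0 < v i)
    (heig : Astar.mulVec v = lam • v)
    (hclosed : ∀ A ∈ 𝒜, ∀ a : Fin m, Astar.updateRow a (A a) ∈ 𝒜)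
    (hrepprim : ∀ A ∈ 𝒜, ∀ a : Fin m, _root_.IsPrimitive (Astar.updateRow a (A a)))
    (hmin : IsLeast {r : ℝ | ∃ A ∈ 𝒜, r = specRad A} lam) :
    ∀ A ∈ 𝒜, ∀ i, lam * v i ≤ A.mulVec v i := by
  by_contra hcon
  push_neg at hcon
  obtain ⟨A, hA, a₀, hlt⟩ := hcon
  set B := Astar.updateRow a₀ (A a₀) with hBdef
  have hBmem : B ∈ 𝒜 := hclosed A hA a₀
  have hBnn : ∀ i j, 0 ≤ B i j := hnn B hBmem
  have hBprim : _root_.IsPrimitive B := hrepprim A hA a₀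
  have hBa₀ : B.mulVec v a₀ = A.mulVec v a₀ := by
    simp [hBdef, Matrix.mulVec, Matrix.updateRow_self]
  have hBle : ∀ i, B.mulVec v i ≤ lam * v i := by
    intro i
    by_cases h : i = a₀
    · subst h
      rw [hBa₀]
      exact hlt.le
    · have : B.mulVec v i = Astar.mulVec v i := by
        simp [hBdef, Matrix.mulVec, Matrix.updateRow_ne h]
      rw [this, heig]
      simp
  have hstrict : B.mulVec v a₀ < lam * v a₀ := by rw [hBa₀]; exact hlt
  have hlp : 0 < lam := by
    have h0 : 0 ≤ B.mulVec v a₀ := by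
      simp only [Matrix.mulVec, dotProduct]
      exact Finset.sum_nonneg fun j _ => mul_nonneg (hBnn a₀ j) (hv j).le
    nlinarith [hv a₀, lt_of_le_of_lt h0 hstrict]
  have h1 : specRad B < lam := specRad_lt_of hBnn hBprim hlp hv hBle hstrict
  have h2 : lam ≤ specRad B := hmin.2 ⟨B, hBmem, rfl⟩
  linarith
end

section
/- Let 𝒜 be a finite set of nonnegative m×m matrices, let A* ∈ 𝒜 be primitive with spectral radius λ > 0 and positive Perron vector v (A*v = λv), and suppose A v ≥ λ v for all A ∈ 𝒜. Define the Bellman operator ℱ on ℝ₊^m by (ℱx)_a = min over A ∈ 𝒜 of (A x)_a. Then ℱ(v) = λ v, and for the normalized iterates yₙ := λ^{-n} ℱⁿ(𝟙) (where 𝟙 is the all-ones vector), the sequence yₙ converges to β v for some β > 0. -/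
open Matrix Filter

private lemma tendsto_finset_sup'_aux {ι : Type*} (s : Finset ι) (hs : s.Nonempty)
    (f : ι → ℕ → ℝ) (g : ι → ℝ) (h : ∀ i ∈ s, Tendsto (f i) atTop (nhds (g i))) :
    Tendsto (fun n => s.sup' hs (fun i => f i n)) atTop (nhds (s.sup' hs g)) := by
  induction hs using Finset.Nonempty.cons_induction with
  | singleton i => simpa using h i (by simp)
  | cons i t hi ht ih =>
    simp only [Finset.sup'_cons ht]
    exact (h i (by simp)).max (ih fun j hj => h j (by simp [hj]))

private lemma inf'_const_mul_aux {ι : Type*} (s : Finset ι) (hs : s.Nonempty)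
    (f : ι → ℝ) (c : ℝ) (hc : 0 ≤ c) :
    s.inf' hs (fun i => c * f i) = c * s.inf' hs f := by
  induction hs using Finset.Nonempty.cons_induction with
  | singleton i => simp
  | cons i t hi ht ih =>
    simp only [Finset.inf'_cons ht, ih]
    exact (mul_min_of_nonneg _ _ hc).symm

private lemma continuous_finset_inf'_aux {ι X : Type*} [TopologicalSpace X]
    (s : Finset ι) (hs : s.Nonempty) (f : ι → X → ℝ) (h : ∀ i ∈ s, Continuous (f i)) :
    Continuous (fun x => s.inf' hs (fun i => f i x)) := by
  induction hs using Finset.Nonempty.cons_induction with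
  | singleton i => simpa using h i (by simp)
  | cons i t hi ht ih =>
    simp only [Finset.inf'_cons ht]
    exact (h i (by simp)).min (ih fun j hj => h j (by simp [hj]))

/-- with `A* ∈ 𝒜` primitive of spectral radius `lam > 0`, Perron
vector `v > 0` with `A*v = lam v`, and `A v ≥ lam v` for all `A ∈ 𝒜`, the
Bellman operator `(ℱx)_a = min_{A ∈ 𝒜} (Ax)_a` satisfies `ℱ(v) = lam • v`,
and the normalized iterates `yₙ = lam⁻ⁿ ℱⁿ(𝟙)` converge to `β v` for some
`β > 0`. -/
theorem stmt6 {m : ℕ} (𝒜 : Finset (Matrix (Fin m) (Fin m) ℝ))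
    (hne : 𝒜.Nonempty)
    (hnn : ∀ A ∈ 𝒜, ∀ i j, 0 ≤ A i j)
    (Astar : Matrix (Fin m) (Fin m) ℝ) (hmem : Astar ∈ 𝒜)
    (hprim : _root_.IsPrimitive Astar)
    (lam : ℝ) (hlam : 0 < lam) (hlamspec : lam = specRad Astar)
    (v : Fin m → ℝ) (hv : ∀ i, 0 < v i)
    (heig : Astar.mulVec v = lam • v)
    (hAv : ∀ A ∈ 𝒜, ∀ i, lam * v i ≤ A.mulVec v i)
    (F : (Fin m → ℝ) → (Fin m → ℝ))
    (hF : ∀ (x : Fin m → ℝ) (a : Fin m), F x a = 𝒜.inf' hne (fun A => A.mulVec x a)) :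
    F v = lam • v ∧
    ∃ β : ℝ, 0 < β ∧ ∀ a : Fin m,
      Tendsto (fun n : ℕ => (F^[n] (fun _ => (1 : ℝ))) a / lam ^ n)
        atTop (nhds (β * v a)) := by
  -- Part 1
  have hFv : F v = lam • v := by
    funext a
    rw [hF]
    apply le_antisymm
    · calc 𝒜.inf' hne (fun A => A.mulVec v a) ≤ Astar.mulVec v a := Finset.inf'_le _ hmem
        _ = (lam • v) a := by rw [heig]
    · exact Finset.le_inf' _ _ fun A hA => by simpa using hAv A hA a
  refine ⟨hFv, ?_⟩
  rcases Nat.eq_zero_or_pos m with hm | hm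
  · exact ⟨1, one_pos, fun a => absurd a.isLt (by omega)⟩
  haveI : Nonempty (Fin m) := ⟨⟨0, hm⟩⟩
  obtain ⟨k, hk1, hposk⟩ := hprim
  -- basic properties of F
  have hmono : ∀ x x' : Fin m → ℝ, x ≤ x' → F x ≤ F x' := by
    intro x x' hxx a
    rw [hF, hF]
    apply Finset.le_inf'
    intro A hA
    refine le_trans (Finset.inf'_le _ hA) ?_
    unfold Matrix.mulVec dotProduct
    exact Finset.sum_le_sum fun b _ => mul_le_mul_of_nonneg_left (hxx b) (hnn A hA a b)
  have hhom : ∀ (c : ℝ), 0 ≤ c → ∀ x, F (c • x) = c • F x := by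
    intro c hc x
    funext a
    rw [hF]
    have : ∀ A : Matrix (Fin m) (Fin m) ℝ, A.mulVec (c • x) a = c * A.mulVec x a := by
      intro A
      rw [Matrix.mulVec_smul]
      simp
    simp only [this]
    rw [inf'_const_mul_aux]
    · simp [hF]
    · exact hc
  have hFle : ∀ x, F x ≤ Astar.mulVec x := by
    intro x a
    rw [hF]
    exact Finset.inf'_le _ hmem
  have hAmono : ∀ x x' : Fin m → ℝ, x ≤ x' → Astar.mulVec x ≤ Astar.mulVec x' := by
    intro x x' hxx a
    unfold Matrix.mulVec dotProduct
    exact Finset.sum_le_sum fun b _ => mul_le_mul_of_nonneg_left (hxx b) (hnn Astar hmem a b)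
  -- normalized iterates
  set y : ℕ → Fin m → ℝ := fun n => (lam ^ n)⁻¹ • F^[n] (fun _ => (1 : ℝ)) with hy
  have hlampow : ∀ n : ℕ, (0:ℝ) < lam ^ n := fun n => pow_pos hlam n
  have hstep : ∀ n, y (n + 1) = lam⁻¹ • F (y n) := by
    intro n
    have h1 : lam ^ n • y n = F^[n] (fun _ => (1:ℝ)) := by
      rw [hy]
      rw [smul_smul]
      rw [mul_inv_cancel₀ (hlampow n).ne', one_smul]
    have h2 : F^[n + 1] (fun _ => (1:ℝ)) = F (F^[n] (fun _ => (1:ℝ))) :=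
      Function.iterate_succ_apply' F n _
    have h3 : F^[n + 1] (fun _ => (1:ℝ)) = lam ^ n • F (y n) := by
      rw [h2, ← h1, hhom (lam ^ n) (hlampow n).le]
    show (lam ^ (n + 1))⁻¹ • F^[n + 1] (fun _ => (1:ℝ)) = lam⁻¹ • F (y n)
    rw [h3, smul_smul]
    congr 1
    rw [pow_succ, mul_inv, mul_comm (lam ^ n)⁻¹ lam⁻¹, mul_assoc,
      inv_mul_cancel₀ (hlampow n).ne', mul_one]
  -- iterated step
  have hyk : ∀ n j, y (n + j) = (lam ^ j)⁻¹ • F^[j] (y n) := by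
    intro n j
    induction j with
    | zero => simp
    | succ j ih =>
      have : n + (j + 1) = (n + j) + 1 := by omega
      rw [this, hstep, ih, hhom ((lam ^ j)⁻¹) (by positivity), smul_smul,
        Function.iterate_succ_apply']
      congr 1
      rw [pow_succ, mul_inv, mul_comm]
  -- alpha and beta
  set al : ℕ → ℝ := fun n => Finset.univ.inf' Finset.univ_nonempty (fun a => y n a / v a) with hal
  set be : ℕ → ℝ := fun n => Finset.univ.sup' Finset.univ_nonempty (fun a => y n a / v a) with hbe
  have hylb : ∀ n a, al n * v a ≤ y n a := by
    intro n a
    have := Finset.inf'_le (fun a => y n a / v a) (Finset.mem_univ a)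
    calc al n * v a ≤ (y n a / v a) * v a := by
          apply mul_le_mul_of_nonneg_right _ (hv a).le
          exact le_trans (Finset.inf'_le _ (Finset.mem_univ a)) (le_refl _)
      _ = y n a := div_mul_cancel₀ _ (hv a).ne'
  have hyub : ∀ n a, y n a ≤ be n * v a := by
    intro n a
    calc y n a = (y n a / v a) * v a := (div_mul_cancel₀ _ (hv a).ne').symm
      _ ≤ be n * v a := mul_le_mul_of_nonneg_right
          (Finset.le_sup' (fun a => y n a / v a) (Finset.mem_univ a)) (hv a).le
  have hal0 : 0 < al 0 := by
    rw [hal]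
    rw [Finset.lt_inf'_iff]
    intro a _
    have : y 0 a = 1 := by simp [hy]
    rw [this]
    exact div_pos one_pos (hv a)
  -- monotonicity of al
  have hal_step : ∀ n, 0 < al n → al n ≤ al (n + 1) := by
    intro n hpos
    have hlow : al n • v ≤ y n := fun a => by
      simpa [Pi.smul_apply, smul_eq_mul] using hylb n a
    have h1 : F (al n • v) ≤ F (y n) := hmono _ _ hlow
    have h2 : F (al n • v) = al n • (lam • v) := by rw [hhom _ hpos.le, hFv]
    apply Finset.le_inf'
    intro a _
    rw [le_div_iff₀ (hv a)]
    have h3 : y (n + 1) a = lam⁻¹ * F (y n) a := by rw [hstep n]; simp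
    rw [h3]
    have h4 : al n * (lam * v a) ≤ F (y n) a := by
      have := h1 a
      rw [h2] at this
      simpa using this
    calc al n * v a = lam⁻¹ * (al n * (lam * v a)) := by field_simp
      _ ≤ lam⁻¹ * F (y n) a := by
          exact mul_le_mul_of_nonneg_left h4 (by positivity)
  have halpos : ∀ n, 0 < al n := by
    intro n
    induction n with
    | zero => exact hal0
    | succ n ih => exact lt_of_lt_of_le ih (hal_step n ih)
  have halmono : Monotone al := monotone_nat_of_le_succ fun n => hal_step n (halpos n)
  -- antitonicity of be
  have hbe_step : ∀ n, be (n + 1) ≤ be n := by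
    intro n
    apply Finset.sup'_le
    intro a _
    rw [div_le_iff₀ (hv a)]
    have h3 : y (n + 1) a = lam⁻¹ * F (y n) a := by rw [hstep n]; simp
    have hup : y n ≤ be n • v := fun b => by
      simpa [Pi.smul_apply, smul_eq_mul] using hyub n b
    have h4 : F (y n) a ≤ be n * (lam * v a) := by
      calc F (y n) a ≤ Astar.mulVec (y n) a := hFle _ a
        _ ≤ Astar.mulVec (be n • v) a := hAmono _ _ hup a
        _ = be n * (lam * v a) := by rw [Matrix.mulVec_smul, heig]; simp [mul_assoc]
    rw [h3]
    calc lam⁻¹ * F (y n) a ≤ lam⁻¹ * (be n * (lam * v a)) :=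
          mul_le_mul_of_nonneg_left h4 (by positivity)
      _ = be n * v a := by field_simp
  have hbanti : Antitone be := antitone_nat_of_succ_le hbe_step
  have hab : ∀ n, al n ≤ be n := fun n =>
    le_trans (Finset.inf'_le (fun a => y n a / v a) (Finset.mem_univ (Classical.arbitrary (Fin m))))
      (Finset.le_sup' (fun a => y n a / v a) (Finset.mem_univ (Classical.arbitrary (Fin m))))
  have halbe : ∀ n, al 0 ≤ be n := fun n => le_trans (halmono (Nat.zero_le n)) (hab n)
  have hbdd : BddBelow (Set.range be) := ⟨al 0, by rintro x ⟨n, rfl⟩; exact halbe n⟩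
  set bi : ℝ := ⨅ n, be n with hbi
  have hbipos : 0 < bi := lt_of_lt_of_le hal0 (le_ciInf halbe)
  have hbe_tendsto : Tendsto be atTop (nhds bi) := tendsto_atTop_ciInf hbanti hbdd
  have hbe_ge : ∀ n, bi ≤ be n := fun n => ciInf_le hbdd n
  -- continuity of F
  have hFcont : Continuous F := by
    apply continuous_pi
    intro a
    have hrw : (fun x => F x a) = fun x => 𝒜.inf' hne (fun A => A.mulVec x a) :=
      funext fun x => hF x a
    rw [hrw]
    apply continuous_finset_inf'_aux
    intro A _
    have h2 : (fun x : Fin m → ℝ => A.mulVec x a) = fun x => ∑ b, A a b * x b := by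
      funext x
      simp [Matrix.mulVec, dotProduct]
    rw [h2]
    exact continuous_finset_sum _ fun b _ => continuous_const.mul (continuous_apply b)
  -- F^[j] dominated by Astar^j
  have hFk : ∀ (j : ℕ) (x : Fin m → ℝ), F^[j] x ≤ (Astar ^ j).mulVec x := by
    intro j
    induction j with
    | zero => intro x; simp [Matrix.one_mulVec]
    | succ j ih =>
      intro x
      calc F^[j + 1] x = F (F^[j] x) := Function.iterate_succ_apply' F j x
        _ ≤ Astar.mulVec (F^[j] x) := hFle _
        _ ≤ Astar.mulVec ((Astar ^ j).mulVec x) := hAmono _ _ (ih x)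
        _ = (Astar ^ (j + 1)).mulVec x := by rw [Matrix.mulVec_mulVec, ← pow_succ']
  -- eigenvector of powers
  have hAkv : ∀ j : ℕ, (Astar ^ j).mulVec v = (lam ^ j) • v := by
    intro j
    induction j with
    | zero => simp [Matrix.one_mulVec]
    | succ j ih =>
      rw [pow_succ', ← Matrix.mulVec_mulVec, ih, Matrix.mulVec_smul, heig, smul_smul, pow_succ]
  -- compact box
  have hyK : ∀ n, y n ∈ Set.Icc (al 0 • v) (be 0 • v) := by
    intro n
    constructor
    · intro a
      simp only [Pi.smul_apply, smul_eq_mul]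
      exact le_trans (mul_le_mul_of_nonneg_right (halmono (Nat.zero_le n)) (hv a).le) (hylb n a)
    · intro a
      simp only [Pi.smul_apply, smul_eq_mul]
      exact le_trans (hyub n a) (mul_le_mul_of_nonneg_right (hbanti (Nat.zero_le n)) (hv a).le)
  -- main convergence
  have key : Tendsto y atTop (nhds (bi • v)) := by
    apply tendsto_of_subseq_tendsto
    intro ns hns
    obtain ⟨z, hzK, φ, hφ, hz⟩ := (isCompact_Icc (a := al 0 • v) (b := be 0 • v)).tendsto_subseq
      (x := fun j => y (ns j)) (fun j => hyK (ns j))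
    refine ⟨φ, ?_⟩
    set N : ℕ → ℕ := fun j => ns (φ j) with hNdef
    have hN : Tendsto N atTop atTop := hns.comp hφ.tendsto_atTop
    have hz' : Tendsto (fun j => y (N j)) atTop (nhds z) := hz
    have hzc : ∀ a, Tendsto (fun j => y (N j) a) atTop (nhds (z a)) :=
      fun a => tendsto_pi_nhds.1 hz' a
    have hbeN : Tendsto (fun j => be (N j)) atTop (nhds bi) := hbe_tendsto.comp hN
    have hzle : ∀ a, z a ≤ bi * v a := fun a =>
      le_of_tendsto_of_tendsto' (hzc a) (hbeN.mul_const (v a)) (fun j => hyub (N j) a)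
    set w : Fin m → ℝ := (lam ^ k)⁻¹ • F^[k] z with hw
    have hwt : Tendsto (fun j => y (N j + k)) atTop (nhds w) := by
      have h1 : Tendsto (fun j => F^[k] (y (N j))) atTop (nhds (F^[k] z)) :=
        ((hFcont.iterate k).tendsto z).comp hz'
      exact (h1.const_smul ((lam ^ k)⁻¹)).congr fun j => (hyk (N j) k).symm
    have hNk : Tendsto (fun j => N j + k) atTop atTop :=
      tendsto_atTop_mono (fun j => Nat.le_add_right (N j) k) hN
    have hsup : Finset.univ.sup' Finset.univ_nonempty (fun a => w a / v a) = bi := by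
      have T1 : Tendsto (fun j => be (N j + k)) atTop (nhds bi) := hbe_tendsto.comp hNk
      have T2 : Tendsto (fun j => be (N j + k)) atTop
          (nhds (Finset.univ.sup' Finset.univ_nonempty (fun a => w a / v a))) :=
        tendsto_finset_sup'_aux Finset.univ Finset.univ_nonempty
          (fun a j => y (N j + k) a / v a) (fun a => w a / v a)
          (fun a _ => (tendsto_pi_nhds.1 hwt a).div_const (v a))
      exact tendsto_nhds_unique T2 T1
    have hzeq : z = bi • v := by
      by_contra hzz
      have hex : ∃ a0, z a0 < bi * v a0 := by
        by_contra hcon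
        push_neg at hcon
        exact hzz (funext fun a => by
          simp only [Pi.smul_apply, smul_eq_mul]
          exact le_antisymm (hzle a) (hcon a))
      obtain ⟨a0, ha0⟩ := hex
      have hwlt : ∀ a, w a < bi * v a := by
        intro a
        have hsum : (Astar ^ k).mulVec z a < (Astar ^ k).mulVec (bi • v) a := by
          unfold Matrix.mulVec dotProduct
          apply Finset.sum_lt_sum
          · intro b _
            exact mul_le_mul_of_nonneg_left
              (by simpa [Pi.smul_apply, smul_eq_mul] using hzle b) (hposk a b).le
          · exact ⟨a0, Finset.mem_univ a0,
              mul_lt_mul_of_pos_left (by simpa [Pi.smul_apply, smul_eq_mul] using ha0)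
                (hposk a a0)⟩
        have h5 : (Astar ^ k).mulVec (bi • v) a = bi * (lam ^ k * v a) := by
          rw [Matrix.mulVec_smul, hAkv k]
          simp [smul_smul]
        have h6 : w a ≤ (lam ^ k)⁻¹ * ((Astar ^ k).mulVec z a) := by
          have h7 := hFk k z a
          have h8 : (0:ℝ) ≤ (lam ^ k)⁻¹ := by positivity
          calc w a = (lam ^ k)⁻¹ * F^[k] z a := rfl
            _ ≤ (lam ^ k)⁻¹ * ((Astar ^ k).mulVec z a) := mul_le_mul_of_nonneg_left h7 h8
        calc w a ≤ (lam ^ k)⁻¹ * ((Astar ^ k).mulVec z a) := h6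
          _ < (lam ^ k)⁻¹ * (bi * (lam ^ k * v a)) := by
              rw [← h5]
              exact mul_lt_mul_of_pos_left hsum (by positivity)
          _ = bi * v a := by
              field_simp
      have hlt : Finset.univ.sup' Finset.univ_nonempty (fun a => w a / v a) < bi :=
        (Finset.sup'_lt_iff Finset.univ_nonempty).2 fun a _ => (div_lt_iff₀ (hv a)).2 (hwlt a)
      rw [hsup] at hlt
      exact lt_irrefl _ hlt
    rw [← hzeq]
    exact hz
  -- conclude
  refine ⟨bi, hbipos, fun a => ?_⟩
  have hT := tendsto_pi_nhds.1 key a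
  have hTa : (bi • v) a = bi * v a := rfl
  rw [hTa] at hT
  refine hT.congr fun n => ?_
  show y n a = F^[n] (fun _ => (1:ℝ)) a / lam ^ n
  simp [hy, Pi.smul_apply, smul_eq_mul, inv_mul_eq_div]
end
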